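/- Let a1,a2,a3,b1,b2,b3 be real numbers with 0 < ai < 1 and 0 < bi < 1 for all i, and a1+b3 ≤ 1, a2+b1 ≤ 1, a3+b2 ≤ 1 (indices mod 3). Define s_i = -a_{i+1}/a_i - b_{i+2}/b_i + a_{i+1} + b_{i+2} + 1 for i = 1,2,3 (indices mod 3). Then min(s1,s2,s3) ≤ 0, with equality if and only if a1 = a2 = a3, b1 = b2 = b3, and a_i + b_{i+2} = 1 for all i. -/

import Mathlib

theorem amgm_ge (u v w : ℝ) (hu : 0 < u) (hv : 0 < v) (hw : 0 < w)
    (hr : u * v * w = 1) : 3 ≤ u + v + w := by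
  have h1 : 3 * (u + v + w) ≤ (u*v + v*w + u*w)^2 := by
    nlinarith [sq_nonneg (u*v - v*w), sq_nonneg (v*w - u*w), sq_nonneg (u*v - u*w)]
  have h2 : 3 * (u*v + v*w + u*w) ≤ (u + v + w)^2 := by
    nlinarith [sq_nonneg (u-v), sq_nonneg (v-w), sq_nonneg (u-w)]
  have hp : 0 < u + v + w := by positivity
  have hq : 0 < u*v + v*w + u*w := by positivity
  nlinarith [mul_self_nonneg (u+v+w), sq_nonneg (u+v+w-3), mul_pos hp hq]

theorem amgm_eq (u v w : ℝ) (hu : 0 < u) (hv : 0 < v) (hw : 0 < w)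
    (hr : u * v * w = 1) (hp : u + v + w = 3) : u = 1 ∧ v = 1 ∧ w = 1 := by
  have hq1 : u*v + v*w + u*w ≤ 3 := by
    nlinarith [sq_nonneg (u-v), sq_nonneg (v-w), sq_nonneg (u-w)]
  have hq2 : 3 ≤ u*v + v*w + u*w := by
    have h1 : 9 ≤ (u*v + v*w + u*w)^2 := by
      nlinarith [sq_nonneg (u*v - v*w), sq_nonneg (v*w - u*w), sq_nonneg (u*v - u*w)]
    have hq : 0 < u*v + v*w + u*w := by positivity
    nlinarith
  refine ⟨?_, ?_, ?_⟩ <;> nlinarith [sq_nonneg (u-1), sq_nonneg (v-1), sq_nonneg (w-1)]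

set_option maxHeartbeats 1000000 in
theorem stmt_0 (a b : ZMod 3 → ℝ)
    (ha : ∀ i, 0 < a i ∧ a i < 1) (hb : ∀ i, 0 < b i ∧ b i < 1)
    (hab : ∀ i, a i + b (i + 2) ≤ 1)
    (s : ZMod 3 → ℝ)
    (hs : ∀ i, s i = -(a (i + 1) / a i) - b (i + 2) / b i + a (i + 1) + b (i + 2) + 1) :
    min (s 0) (min (s 1) (s 2)) ≤ 0 ∧
      (min (s 0) (min (s 1) (s 2)) = 0 ↔
        ((∀ i, a i = a (i + 1)) ∧ (∀ i, b i = b (i + 1)) ∧ ∀ i, a i + b (i + 2) = 1)) := by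
  have e01 : ((0:ZMod 3) + 1) = 1 := by decide
  have e02 : ((0:ZMod 3) + 2) = 2 := by decide
  have e11 : ((1:ZMod 3) + 1) = 2 := by decide
  have e12 : ((1:ZMod 3) + 2) = 0 := by decide
  have e21 : ((2:ZMod 3) + 1) = 0 := by decide
  have e22 : ((2:ZMod 3) + 2) = 1 := by decide
  obtain ⟨ha0, ha0'⟩ := ha 0
  obtain ⟨ha1, ha1'⟩ := ha 1
  obtain ⟨ha2, ha2'⟩ := ha 2
  obtain ⟨hb0, hb0'⟩ := hb 0
  obtain ⟨hb1, hb1'⟩ := hb 1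
  obtain ⟨hb2, hb2'⟩ := hb 2
  have hab0 := hab 0; rw [e02] at hab0
  have hab1 := hab 1; rw [e12] at hab1
  have hab2 := hab 2; rw [e22] at hab2
  have hs0 := hs 0; rw [e01, e02] at hs0
  have hs1 := hs 1; rw [e11, e12] at hs1
  have hs2 := hs 2; rw [e21, e22] at hs2
  -- AM-GM for the a ratios
  have hua : (a 1 / a 0) * (a 2 / a 1) * (a 0 / a 2) = 1 := by field_simp
  have hub : (b 2 / b 0) * (b 0 / b 1) * (b 1 / b 2) = 1 := by field_simp
  have hA : 3 ≤ a 1 / a 0 + a 2 / a 1 + a 0 / a 2 :=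
    amgm_ge _ _ _ (by positivity) (by positivity) (by positivity) hua
  have hB : 3 ≤ b 2 / b 0 + b 0 / b 1 + b 1 / b 2 :=
    amgm_ge _ _ _ (by positivity) (by positivity) (by positivity) hub
  have hsum : s 0 + s 1 + s 2 ≤ 0 := by rw [hs0, hs1, hs2]; linarith
  have hmin : min (s 0) (min (s 1) (s 2)) ≤ 0 := by
    rcases le_total (s 0) (min (s 1) (s 2)) with h | h
    · rcases le_total (s 1) (s 2) with h' | h' <;> simp [min_eq_left, h] <;> linarith [min_le_left (s 1) (s 2), min_le_right (s 1) (s 2)]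
    · rw [min_eq_right h]
      rcases le_total (s 1) (s 2) with h' | h' <;>
        [rw [min_eq_left h'] at *; rw [min_eq_right h'] at *] <;> linarith
  refine ⟨hmin, ?_, ?_⟩
  · -- min = 0 → equalities
    intro h
    have h0 : 0 ≤ s 0 := by
      have := min_le_left (s 0) (min (s 1) (s 2)); linarith [h ▸ this]
    have h1 : 0 ≤ s 1 := by
      have := le_trans (min_le_right (s 0) (min (s 1) (s 2))) (min_le_left (s 1) (s 2))
      linarith [h ▸ this]
    have h2 : 0 ≤ s 2 := by
      have := le_trans (min_le_right (s 0) (min (s 1) (s 2))) (min_le_right (s 1) (s 2))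
      linarith [h ▸ this]
    have hz0 : s 0 = 0 := by linarith
    have hz1 : s 1 = 0 := by linarith
    have hz2 : s 2 = 0 := by linarith
    rw [hz0] at hs0; rw [hz1] at hs1; rw [hz2] at hs2
    have hC : a 0 + b 2 = 1 ∧ a 1 + b 0 = 1 ∧ a 2 + b 1 = 1 := by
      constructor; · linarith
      constructor <;> linarith
    have hAeq : a 1 / a 0 + a 2 / a 1 + a 0 / a 2 = 3 := by linarith
    have hBeq : b 2 / b 0 + b 0 / b 1 + b 1 / b 2 = 3 := by linarith
    obtain ⟨hx1, hx2, hx3⟩ :=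
      amgm_eq _ _ _ (by positivity) (by positivity) (by positivity) hua hAeq
    obtain ⟨hy1, hy2, hy3⟩ :=
      amgm_eq _ _ _ (by positivity) (by positivity) (by positivity) hub hBeq
    have ea1 : a 1 = a 0 := by field_simp at hx1; linarith
    have ea2 : a 2 = a 1 := by field_simp at hx2; linarith
    have ea3 : a 0 = a 2 := by field_simp at hx3; linarith
    have eb1 : b 2 = b 0 := by field_simp at hy1; linarith
    have eb2 : b 0 = b 1 := by field_simp at hy2; linarith
    obtain ⟨hC0, hC1, hC2⟩ := hC
    have hcases : ∀ j : ZMod 3, j = 0 ∨ j = 1 ∨ j = 2 := by decide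
    refine ⟨?_, ?_, ?_⟩ <;> intro i <;> rcases hcases i with rfl | rfl | rfl
    · rw [e01]; exact ea1.symm
    · rw [e11]; exact ea2.symm
    · rw [e21]; exact ea3.symm
    · rw [e01]; exact eb2
    · rw [e11]; exact eb2.symm.trans eb1.symm
    · rw [e21]; exact eb1
    · rw [e02]; exact hC0
    · rw [e12]; exact hC1
    · rw [e22]; exact hC2
  · -- equalities → min = 0
    rintro ⟨haa, hbb, habe⟩
    have ea1 := haa 0; rw [e01] at ea1
    have ea2 := haa 1; rw [e11] at ea2
    have eb1 := hbb 0; rw [e01] at eb1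
    have eb2 := hbb 1; rw [e11] at eb2
    have he0 := habe 0; rw [e02] at he0
    have he1 := habe 1; rw [e12] at he1
    have he2 := habe 2; rw [e22] at he2
    have ea02 : a 0 = a 2 := ea1.trans ea2
    have eb02 : b 0 = b 2 := eb1.trans eb2
    have r1 : a 1 / a 0 = 1 := by rw [← ea1, div_self ha0.ne']
    have r2 : a 2 / a 1 = 1 := by rw [← ea2, div_self ha1.ne']
    have r3 : a 0 / a 2 = 1 := by rw [ea02, div_self ha2.ne']
    have q1 : b 2 / b 0 = 1 := by rw [← eb02, div_self hb0.ne']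
    have q2 : b 0 / b 1 = 1 := by rw [eb1, div_self hb1.ne']
    have q3 : b 1 / b 2 = 1 := by rw [eb2, div_self hb2.ne']
    have z0 : s 0 = 0 := by rw [hs0, r1, q1]; linarith
    have z1 : s 1 = 0 := by rw [hs1, r2, q2]; linarith
    have z2 : s 2 = 0 := by rw [hs2, r3, q3]; linarith
    rw [z0, z1, z2]; simp
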